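/- Let p : ℝ → ℝ be a measurable function with p(x) ≥ 0 for all x, ∫ p(x) dx = 1, ∫ x · p(x) dx = x̄, and ∫ (x − x̄)² · p(x) dx = σ² with σ > 0, and suppose x ↦ p(x) * log (p(x)) is integrable. Then the differential entropy satisfies −∫ p(x) * log (p(x)) dx ≤ 1/2 + log (√(2πσ²)). Moreover, the Gaussian density g(x) = (2πσ²)^(−1/2) · exp(−(x − x̄)²/(2σ²)) satisfies all the hypotheses and attains equality: −∫ g(x) * log (g(x)) dx = 1/2 + log (√(2πσ²)). -/

import Mathlib

open MeasureTheory

/-- The Gaussian density `g(x) = (2πσ²)^(−1/2) · exp(−(x − xbar)²/(2σ²))`. -/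
noncomputable def gaussDensity (xbar σ : ℝ) (x : ℝ) : ℝ :=
  (2 * Real.pi * σ ^ 2) ^ (-(1 : ℝ) / 2) * Real.exp (-(x - xbar) ^ 2 / (2 * σ ^ 2))

section Aux

open Real

lemma aux_odd_integral (b : ℝ) : ∫ x : ℝ, x * Real.exp (-b * x ^ 2) = 0 := by
  have h := integral_neg_eq_self (fun y : ℝ => y * Real.exp (-b * y ^ 2)) volume
  simp only [neg_sq, neg_mul, integral_neg] at h
  simp only [neg_mul]
  linarith

lemma aux_sq_integral {b : ℝ} (hb : 0 < b) :
    ∫ x : ℝ, x ^ 2 * Real.exp (-b * x ^ 2) = Real.sqrt (π / b) / (2 * b) := by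
  have habs := integral_comp_abs (f := fun t : ℝ => t ^ 2 * Real.exp (-b * t ^ 2))
  simp only [sq_abs] at habs
  rw [habs]
  have hIoi : ∫ x in Set.Ioi (0:ℝ), x ^ 2 * Real.exp (-b * x ^ 2)
      = ∫ x in Set.Ioi (0:ℝ), x ^ (2:ℝ) * Real.exp (-b * x ^ (2:ℝ)) := by
    refine setIntegral_congr_fun measurableSet_Ioi (fun x hx => ?_)
    rw [show ((2:ℝ)) = ((2:ℕ):ℝ) by norm_num, Real.rpow_natCast]
  rw [hIoi, integral_rpow_mul_exp_neg_mul_rpow two_pos (by norm_num) hb]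
  have hG : Real.Gamma ((2 + 1) / 2) = Real.sqrt π / 2 := by
    have : ((2:ℝ) + 1) / 2 = 1/2 + 1 := by norm_num
    rw [this, Real.Gamma_add_one (by norm_num), Real.Gamma_one_half_eq]
    ring
  rw [hG]
  have h1 : b ^ (-((2:ℝ) + 1) / 2) = (Real.sqrt b)⁻¹ * b⁻¹ := by
    have : (-((2:ℝ) + 1) / 2) = -(1/2) + -1 := by norm_num
    rw [this, Real.rpow_add hb, Real.rpow_neg hb.le, Real.rpow_neg hb.le, Real.rpow_one,
      ← Real.sqrt_eq_rpow]
  rw [h1, Real.sqrt_div Real.pi_nonneg]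
  have hsb : Real.sqrt b ≠ 0 := ne_of_gt (Real.sqrt_pos.mpr hb)
  field_simp

end Aux

theorem gaussian_maximizes_differential_entropy
    (xbar σ : ℝ) (hσ : 0 < σ)
    (p : ℝ → ℝ) (hmeas : Measurable p) (hp0 : ∀ x, 0 ≤ p x)
    (hp1 : ∫ x, p x = 1)
    (hmean : ∫ x, x * p x = xbar)
    (hvar : ∫ x, (x - xbar) ^ 2 * p x = σ ^ 2)
    (hint : Integrable (fun x => p x * Real.log (p x))) :
    (-∫ x, p x * Real.log (p x) ≤ 1 / 2 + Real.log (Real.sqrt (2 * Real.pi * σ ^ 2))) ∧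
      Measurable (gaussDensity xbar σ) ∧
      (∀ x, 0 ≤ gaussDensity xbar σ x) ∧
      (∫ x, gaussDensity xbar σ x = 1) ∧
      (∫ x, x * gaussDensity xbar σ x = xbar) ∧
      (∫ x, (x - xbar) ^ 2 * gaussDensity xbar σ x = σ ^ 2) ∧
      Integrable (fun x => gaussDensity xbar σ x * Real.log (gaussDensity xbar σ x)) ∧
      (-∫ x, gaussDensity xbar σ x * Real.log (gaussDensity xbar σ x)
        = 1 / 2 + Real.log (Real.sqrt (2 * Real.pi * σ ^ 2))) := by
  have hs : (0:ℝ) < σ ^ 2 := pow_pos hσ 2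
  have h2πs : (0:ℝ) < 2 * Real.pi * σ ^ 2 := by positivity
  set b : ℝ := (2 * σ ^ 2)⁻¹ with hbdef
  set c : ℝ := (2 * Real.pi * σ ^ 2) ^ (-(1 : ℝ) / 2) with hcdef
  have hb : 0 < b := by rw [hbdef]; positivity
  have hcsqrt : c = (Real.sqrt (2 * Real.pi * σ ^ 2))⁻¹ := by
    rw [hcdef, show (-(1:ℝ)/2) = -(1/2:ℝ) by norm_num, Real.rpow_neg h2πs.le,
      Real.sqrt_eq_rpow]
  have hsqrtpos : 0 < Real.sqrt (2 * Real.pi * σ ^ 2) := Real.sqrt_pos.mpr h2πs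
  have hcpos : 0 < c := by rw [hcsqrt]; exact inv_pos.mpr hsqrtpos
  have hc1 : c * Real.sqrt (2 * Real.pi * σ ^ 2) = 1 := by
    rw [hcsqrt]; exact inv_mul_cancel₀ hsqrtpos.ne'
  have hgdef : ∀ x, gaussDensity xbar σ x = c * Real.exp (-b * (x - xbar) ^ 2) := by
    intro x
    unfold gaussDensity
    rw [← hcdef]
    congr 1
    rw [hbdef]
    ring
  -- base integrals
  have hI0 : ∫ x : ℝ, Real.exp (-b * x ^ 2) = Real.sqrt (2 * Real.pi * σ ^ 2) := by
    rw [integral_gaussian]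
    congr 1
    rw [hbdef]
    field_simp
  have hI2 : ∫ x : ℝ, x ^ 2 * Real.exp (-b * x ^ 2)
      = σ ^ 2 * Real.sqrt (2 * Real.pi * σ ^ 2) := by
    rw [aux_sq_integral hb, hbdef]
    rw [show Real.pi / (2 * σ ^ 2)⁻¹ = 2 * Real.pi * σ ^ 2 by field_simp]
    field_simp
  have ib0 : Integrable (fun x : ℝ => Real.exp (-b * x ^ 2)) := integrable_exp_neg_mul_sq hb
  have ib1 : Integrable (fun x : ℝ => x * Real.exp (-b * x ^ 2)) :=
    integrable_mul_exp_neg_mul_sq hb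
  have ib2 : Integrable (fun x : ℝ => x ^ 2 * Real.exp (-b * x ^ 2)) := by
    have h := integrable_rpow_mul_exp_neg_mul_sq hb (by norm_num : (-1:ℝ) < 2)
    exact h.congr (Filter.Eventually.of_forall fun x => by
      show x ^ (2:ℝ) * Real.exp (-b * x ^ 2) = x ^ 2 * Real.exp (-b * x ^ 2)
      rw [show ((2:ℝ)) = ((2:ℕ):ℝ) by norm_num, Real.rpow_natCast])
  -- integrability of the Gaussian and its moments
  have hgfun : gaussDensity xbar σ
      = fun x => (fun y => c * Real.exp (-b * y ^ 2)) (x - xbar) := funext fun x => hgdef x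
  have hgint : Integrable (gaussDensity xbar σ) := by
    rw [hgfun]; exact (ib0.const_mul c).comp_sub_right xbar
  have hgvint : Integrable (fun x => (x - xbar) ^ 2 * gaussDensity xbar σ x) := by
    have h : Integrable (fun y : ℝ => y ^ 2 * (c * Real.exp (-b * y ^ 2))) :=
      (ib2.const_mul c).congr (Filter.Eventually.of_forall fun y => by ring)
    exact (h.comp_sub_right xbar).congr (Filter.Eventually.of_forall fun x => by
      show (x - xbar) ^ 2 * (c * Real.exp (-b * (x - xbar) ^ 2))
        = (x - xbar) ^ 2 * gaussDensity xbar σ x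
      rw [hgdef x])
  -- the Gaussian integrals
  have hg1 : ∫ x, gaussDensity xbar σ x = 1 := by
    rw [hgfun, integral_sub_right_eq_self (fun y => c * Real.exp (-b * y ^ 2)) xbar,
      integral_const_mul, hI0, hc1]
  have hgmean : ∫ x, x * gaussDensity xbar σ x = xbar := by
    rw [← integral_add_right_eq_self (μ := volume) (fun x => x * gaussDensity xbar σ x) xbar]
    have heq : (fun y : ℝ => (y + xbar) * gaussDensity xbar σ (y + xbar))
        = fun y => c * (y * Real.exp (-b * y ^ 2)) + xbar * (c * Real.exp (-b * y ^ 2)) := by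
      funext y
      rw [hgdef, add_sub_cancel_right]
      ring
    rw [heq, integral_add (ib1.const_mul c) ((ib0.const_mul c).const_mul xbar),
      integral_const_mul, integral_const_mul, integral_const_mul, aux_odd_integral, hI0]
    rw [mul_zero, hc1, mul_one, zero_add]
  have hgvar : ∫ x, (x - xbar) ^ 2 * gaussDensity xbar σ x = σ ^ 2 := by
    have heq : (fun x : ℝ => (x - xbar) ^ 2 * gaussDensity xbar σ x)
        = fun x => (fun y => c * (y ^ 2 * Real.exp (-b * y ^ 2))) (x - xbar) := by
      funext x
      rw [hgdef]
      ring
    rw [heq, integral_sub_right_eq_self (fun y => c * (y ^ 2 * Real.exp (-b * y ^ 2))) xbar,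
      integral_const_mul, hI2]
    rw [show c * (σ ^ 2 * Real.sqrt (2 * Real.pi * σ ^ 2))
      = σ ^ 2 * (c * Real.sqrt (2 * Real.pi * σ ^ 2)) from by ring, hc1, mul_one]
  -- logarithm of the Gaussian density
  have hL : ∀ x, Real.log (gaussDensity xbar σ x)
      = -Real.log (Real.sqrt (2 * Real.pi * σ ^ 2)) - b * (x - xbar) ^ 2 := by
    intro x
    rw [hgdef, Real.log_mul hcpos.ne' (Real.exp_ne_zero _), Real.log_exp, hcsqrt,
      Real.log_inv]
    ring
  -- cross entropy against the Gaussian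
  have cross : ∀ f : ℝ → ℝ, Integrable f → (∫ x, f x = 1) →
      Integrable (fun x => (x - xbar) ^ 2 * f x) → (∫ x, (x - xbar) ^ 2 * f x = σ ^ 2) →
      ∫ x, f x * Real.log (gaussDensity xbar σ x)
        = -Real.log (Real.sqrt (2 * Real.pi * σ ^ 2)) - 1 / 2 := by
    intro f hf h1 hf2 h2
    have heq : (fun x => f x * Real.log (gaussDensity xbar σ x))
        = fun x => -Real.log (Real.sqrt (2 * Real.pi * σ ^ 2)) * f x
            - b * ((x - xbar) ^ 2 * f x) := by
      funext x
      rw [hL x]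
      ring
    rw [heq, integral_sub (hf.const_mul _) (hf2.const_mul b), integral_const_mul,
      integral_const_mul, h1, h2, hbdef]
    field_simp
  -- integrability of p and its variance integrand
  have hpint : Integrable p := by
    by_contra h
    rw [integral_undef h] at hp1
    norm_num at hp1
  have hpvint : Integrable (fun x => (x - xbar) ^ 2 * p x) := by
    by_contra h
    rw [integral_undef h] at hvar
    exact absurd hvar.symm hs.ne'
  have hplogg : Integrable (fun x => p x * Real.log (gaussDensity xbar σ x)) := by
    have h := (hpint.const_mul (-Real.log (Real.sqrt (2 * Real.pi * σ ^ 2)))).sub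
      (hpvint.const_mul b)
    exact h.congr (Filter.Eventually.of_forall fun x => by
      simp only [Pi.sub_apply]
      rw [hL x]
      ring)
  -- Gibbs' inequality, pointwise
  have hpw : ∀ x, p x - gaussDensity xbar σ x
      ≤ p x * Real.log (p x) - p x * Real.log (gaussDensity xbar σ x) := by
    intro x
    have hgpos : 0 < gaussDensity xbar σ x := by
      rw [hgdef]
      exact mul_pos hcpos (Real.exp_pos _)
    rcases (hp0 x).eq_or_lt with h0 | hp
    · rw [← h0]
      simp
      linarith
    · have hlog := Real.log_le_sub_one_of_pos (div_pos hgpos hp)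
      rw [Real.log_div hgpos.ne' hp.ne'] at hlog
      have h2 := mul_le_mul_of_nonneg_left hlog hp.le
      have h3 : p x * (gaussDensity xbar σ x / p x - 1)
          = gaussDensity xbar σ x - p x := by field_simp
      nlinarith [h2, h3]
  have hcrossp := cross p hpint hp1 hpvint hvar
  have hgibbs : ∫ x, (p x - gaussDensity xbar σ x)
      ≤ ∫ x, (p x * Real.log (p x) - p x * Real.log (gaussDensity xbar σ x)) :=
    integral_mono (hpint.sub hgint) (hint.sub hplogg) hpw
  rw [integral_sub hpint hgint, integral_sub hint hplogg, hp1, hg1, hcrossp] at hgibbs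
  -- Gaussian entropy integrability and value
  have hglogint : Integrable
      (fun x => gaussDensity xbar σ x * Real.log (gaussDensity xbar σ x)) := by
    have h := (hgint.const_mul (-Real.log (Real.sqrt (2 * Real.pi * σ ^ 2)))).sub
      (hgvint.const_mul b)
    exact h.congr (Filter.Eventually.of_forall fun x => by
      simp only [Pi.sub_apply]
      rw [hL x]
      ring)
  have hcrossg := cross (gaussDensity xbar σ) hgint hg1 hgvint hgvar
  refine ⟨by linarith, ?_, ?_, hg1, hgmean, hgvar, hglogint, by linarith⟩
  · unfold gaussDensity
    fun_prop
  · intro x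
    rw [hgdef]
    positivity
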